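/- arXiv:2403.12587 — 5 statements merged into one kernel-verified Lean document; each statement's English description precedes it below -/
import Mathlib

section
/- For every r-edge-colouring of the complete bipartite graph K_{n,m} (with n, m ≥ 1), the vertex set can be covered by at most 2r−1 monochromatic connected subgraphs (equivalently, monochromatic trees). (Proof idea: fix an edge vw and take the maximal monochromatic stars centred at v and at w; two of them merge via the edge vw.) -/
open SimpleGraph

def dstar {V : Type*} (G : SimpleGraph V) (v w : V) (S T : Set V)
    (hS : ∀ u ∈ S, G.Adj v u) (hT : ∀ u ∈ T, G.Adj w u)
    (hvw : v = w ∨ G.Adj v w) : G.Subgraph where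
  verts := insert v (insert w (S ∪ T))
  Adj a b := ((a = v ∧ (b = w ∨ b ∈ S)) ∨ (a = w ∧ b ∈ T)) ∧ a ≠ b ∨
             ((b = v ∧ (a = w ∨ a ∈ S)) ∨ (b = w ∧ a ∈ T)) ∧ a ≠ b
  adj_sub := by
    rintro a b (⟨(⟨rfl, rfl | hb⟩ | ⟨rfl, hb⟩), hne⟩ | ⟨(⟨rfl, rfl | hb⟩ | ⟨rfl, hb⟩), hne⟩)
    · exact hvw.resolve_left hne
    · exact hS b hb
    · exact hT b hb
    · exact (hvw.resolve_left (Ne.symm hne)).symm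
    · exact (hS a hb).symm
    · exact (hT a hb).symm
  edge_vert := by
    rintro a b (⟨(⟨rfl, _⟩ | ⟨rfl, _⟩), _⟩ | ⟨(⟨rfl, ha⟩ | ⟨rfl, ha⟩), _⟩)
    · exact Set.mem_insert _ _
    · exact Set.mem_insert_of_mem _ (Set.mem_insert _ _)
    · rcases ha with rfl | ha
      · exact Set.mem_insert_of_mem _ (Set.mem_insert _ _)
      · exact Set.mem_insert_of_mem _ (Set.mem_insert_of_mem _ (Or.inl ha))
    · exact Set.mem_insert_of_mem _ (Set.mem_insert_of_mem _ (Or.inr ha))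
  symm := by
    constructor
    rintro a b (⟨h, hne⟩ | ⟨h, hne⟩)
    · exact Or.inr ⟨h, hne.symm⟩
    · exact Or.inl ⟨h, hne.symm⟩

theorem dstar_connected {V : Type*} (G : SimpleGraph V) (v w : V) (S T : Set V)
    (hS : ∀ u ∈ S, G.Adj v u) (hT : ∀ u ∈ T, G.Adj w u)
    (hvw : v = w ∨ G.Adj v w) : (dstar G v w S T hS hT hvw).Connected := by
  set H := dstar G v w S T hS hT hvw with hH
  rw [H.connected_iff', connected_iff_exists_forall_reachable]
  have hv : v ∈ H.verts := Set.mem_insert _ _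
  refine ⟨⟨v, hv⟩, ?_⟩
  have key : ∀ u (hu : u ∈ H.verts), (H.coe).Reachable ⟨v, hv⟩ ⟨u, hu⟩ := by
    have hw : w ∈ H.verts := Set.mem_insert_of_mem _ (Set.mem_insert _ _)
    have reachw : (H.coe).Reachable ⟨v, hv⟩ ⟨w, hw⟩ := by
      by_cases hvw' : v = w
      · subst hvw'; rfl
      · exact Adj.reachable (by exact Or.inl ⟨Or.inl ⟨rfl, Or.inl rfl⟩, hvw'⟩)
    rintro u (rfl | rfl | hu | hu)
    · rfl
    · exact reachw
    · by_cases huv : u = v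
      · subst huv; rfl
      · exact Adj.reachable (by exact Or.inl ⟨Or.inl ⟨rfl, Or.inr hu⟩, Ne.symm huv⟩)
    · by_cases huw : u = w
      · subst huw; exact reachw
      · exact reachw.trans (Adj.reachable (by exact Or.inl ⟨Or.inr ⟨rfl, hu⟩, Ne.symm huw⟩))
  exact fun ⟨u, hu⟩ => key u hu

theorem dstar_mono {V : Type*} (G : SimpleGraph V) (v w : V) (S T : Set V)
    (hS : ∀ u ∈ S, G.Adj v u) (hT : ∀ u ∈ T, G.Adj w u)
    (hvw : v = w ∨ G.Adj v w) {r : ℕ} (c : Sym2 V → Fin r) (col : Fin r)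
    (hcv : ∀ u, (u = w ∨ u ∈ S) → u ≠ v → c s(v, u) = col)
    (hcw : ∀ u ∈ T, u ≠ w → c s(w, u) = col) :
    ∀ e ∈ (dstar G v w S T hS hT hvw).edgeSet, c e = col := by
  intro e he
  induction e using Sym2.ind with
  | _ a b =>
    rw [Subgraph.mem_edgeSet] at he
    rcases he with ⟨(⟨rfl, hb⟩ | ⟨rfl, hb⟩), hne⟩ | ⟨(⟨rfl, hb⟩ | ⟨rfl, hb⟩), hne⟩
    · exact hcv b hb (Ne.symm hne)
    · exact hcw b hb (Ne.symm hne)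
    · rw [Sym2.eq_swap]; exact hcv a hb hne
    · rw [Sym2.eq_swap]; exact hcw a hb hne



/-- A cover of the vertex set of `G` by `k` monochromatic connected subgraphs
(with respect to the edge-colouring `c` with `r` colours). -/
def MonoCover {V : Type*} (G : SimpleGraph V) {r : ℕ} (c : Sym2 V → Fin r) (k : ℕ) : Prop :=
  ∃ H : Fin k → G.Subgraph,
    (∀ i, (H i).Connected) ∧
    (∀ i, ∃ col : Fin r, ∀ e ∈ (H i).edgeSet, c e = col) ∧
    ∀ v, ∃ i, v ∈ (H i).verts

/-- Every `r`-edge-colouring of `K_{n,m}` admits a cover of the vertex set by at most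
`2r - 1` monochromatic connected subgraphs. -/
theorem cover_completeBipartite (n m r : ℕ) (hn : 1 ≤ n) (hm : 1 ≤ m) (hr : 1 ≤ r)
    (c : Sym2 (Fin n ⊕ Fin m) → Fin r) :
    MonoCover (completeBipartiteGraph (Fin n) (Fin m)) c (2 * r - 1) := by
  set G := completeBipartiteGraph (Fin n) (Fin m) with hG
  set x : Fin n ⊕ Fin m := Sum.inl ⟨0, hn⟩ with hx
  set y : Fin n ⊕ Fin m := Sum.inr ⟨0, hm⟩ with hy
  set c0 : Fin r := c s(x, y) with hc0
  set Sv : Fin r → Set (Fin n ⊕ Fin m) :=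
    fun k => {u | (∃ b, u = Sum.inr b) ∧ c s(x, u) = k} with hSvdef
  set Tw : Fin r → Set (Fin n ⊕ Fin m) :=
    fun k => {u | (∃ a, u = Sum.inl a) ∧ c s(y, u) = k} with hTwdef
  have hSv : ∀ k, ∀ u ∈ Sv k, G.Adj x u := by
    rintro k u ⟨⟨b, rfl⟩, _⟩; simp [hG, hx]
  have hTw : ∀ k, ∀ u ∈ Tw k, G.Adj y u := by
    rintro k u ⟨⟨a, rfl⟩, _⟩; simp [hG, hy]
  have hxy : G.Adj x y := by simp [hG, hx, hy]
  have hempS : ∀ u ∈ (∅ : Set (Fin n ⊕ Fin m)), G.Adj x u := by simp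
  have hempT : ∀ u ∈ (∅ : Set (Fin n ⊕ Fin m)), G.Adj y u := by simp
  set H : Fin (2 * r - 1) → G.Subgraph := fun i =>
    if h : i.val < r then
      if (⟨i.val, h⟩ : Fin r) = c0 then
        dstar G x y (Sv c0) (Tw c0) (hSv c0) (hTw c0) (Or.inr hxy)
      else
        dstar G x x (Sv ⟨i.val, h⟩) ∅ (hSv _) hempS (Or.inl rfl)
    else
      dstar G y y
        (Tw ⟨if i.val - r < c0.val then i.val - r else i.val - r + 1, by
          have := i.isLt; have := c0.isLt; split <;> omega⟩) ∅
        (hTw _) hempT (Or.inl rfl) with hHdef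
  have Hpos : ∀ (i : Fin (2 * r - 1)) (h : i.val < r), (⟨i.val, h⟩ : Fin r) = c0 →
      H i = dstar G x y (Sv c0) (Tw c0) (hSv c0) (hTw c0) (Or.inr hxy) := by
    intro i h he
    rw [hHdef]; dsimp only; rw [dif_pos h, if_pos he]
  have Hx : ∀ (i : Fin (2 * r - 1)) (h : i.val < r), ¬ (⟨i.val, h⟩ : Fin r) = c0 →
      H i = dstar G x x (Sv ⟨i.val, h⟩) ∅ (hSv _) hempS (Or.inl rfl) := by
    intro i h he
    rw [hHdef]; dsimp only; rw [dif_pos h, if_neg he]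
  have Hy : ∀ (i : Fin (2 * r - 1)) (h : ¬ i.val < r),
      H i = dstar G y y
        (Tw ⟨if i.val - r < c0.val then i.val - r else i.val - r + 1, by
          have := i.isLt; have := c0.isLt; split <;> omega⟩) ∅
        (hTw _) hempT (Or.inl rfl) := by
    intro i h
    rw [hHdef]; dsimp only; rw [dif_neg h]
  have HyMem : ∀ (i : Fin (2 * r - 1)) (h : ¬ i.val < r) (u) (j : Fin r),
      j.val = (if i.val - r < c0.val then i.val - r else i.val - r + 1) →
      u ∈ Tw j → u ∈ (H i).verts := by
    intro i h u j hj hu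
    rw [Hy i h]
    refine Set.mem_insert_of_mem _ (Set.mem_insert_of_mem _ (Or.inl ?_))
    have hje : j = ⟨if i.val - r < c0.val then i.val - r else i.val - r + 1, by
        have := i.isLt; have := c0.isLt; split <;> omega⟩ := Fin.ext hj
    exact hje ▸ hu
  refine ⟨H, ?_, ?_, ?_⟩
  · intro i
    by_cases h : i.val < r
    · by_cases he : (⟨i.val, h⟩ : Fin r) = c0
      · rw [Hpos i h he]; apply dstar_connected
      · rw [Hx i h he]; apply dstar_connected
    · rw [Hy i h]; apply dstar_connected
  · intro i
    by_cases h : i.val < r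
    · by_cases he : (⟨i.val, h⟩ : Fin r) = c0
      · rw [Hpos i h he]
        refine ⟨c0, dstar_mono _ _ _ _ _ _ _ _ c c0 ?_ ?_⟩
        · rintro u (rfl | ⟨_, hcu⟩) _
          · exact hc0.symm
          · exact hcu
        · rintro u ⟨_, hcu⟩ _; exact hcu
      · rw [Hx i h he]
        refine ⟨⟨i.val, h⟩, dstar_mono _ _ _ _ _ _ _ _ c _ ?_ ?_⟩
        · rintro u (rfl | ⟨_, hcu⟩) hne
          · exact absurd rfl hne
          · exact hcu
        · rintro u hu _; exact absurd hu (Set.notMem_empty u)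
    · rw [Hy i h]
      refine ⟨⟨if i.val - r < c0.val then i.val - r else i.val - r + 1, by
          have := i.isLt; have := c0.isLt; split <;> omega⟩,
        dstar_mono _ _ _ _ _ _ _ _ c _ ?_ ?_⟩
      · rintro u (rfl | ⟨_, hcu⟩) hne
        · exact absurd rfl hne
        · exact hcu
      · rintro u hu _; exact absurd hu (Set.notMem_empty u)
  · intro u
    have cover_left : ∀ a : Fin n, ∃ i, Sum.inl a ∈ (H i).verts := by
      intro a
      set k : Fin r := c s(y, Sum.inl a) with hk
      have hmem : Sum.inl a ∈ Tw k := ⟨⟨a, rfl⟩, rfl⟩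
      by_cases hkc : k = c0
      · refine ⟨⟨c0.val, by have := c0.isLt; omega⟩, ?_⟩
        rw [Hpos _ c0.isLt (Fin.ext rfl)]
        exact Set.mem_insert_of_mem _ (Set.mem_insert_of_mem _ (Or.inr (hkc ▸ hmem)))
      · have hkcv : k.val ≠ c0.val := fun h => hkc (Fin.ext h)
        have hkr := k.isLt
        have hcr := c0.isLt
        refine ⟨⟨r + (if k.val < c0.val then k.val else k.val - 1), by
          split <;> omega⟩, ?_⟩
        refine HyMem _ (Nat.not_lt.mpr (Nat.le_add_right _ _)) _ k ?_ hmem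
        show k.val = if (r + (if k.val < c0.val then k.val else k.val - 1)) - r < c0.val
            then (r + (if k.val < c0.val then k.val else k.val - 1)) - r
            else (r + (if k.val < c0.val then k.val else k.val - 1)) - r + 1
        rw [Nat.add_sub_cancel_left]
        by_cases hlt : k.val < c0.val
        · rw [if_pos hlt, if_pos hlt]
        · rw [if_neg hlt, if_neg (by omega)]
          omega
    have cover_right : ∀ b : Fin m, ∃ i, Sum.inr b ∈ (H i).verts := by
      intro b
      set k : Fin r := c s(x, Sum.inr b) with hk
      have hmem : Sum.inr b ∈ Sv k := ⟨⟨b, rfl⟩, rfl⟩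
      by_cases hkc : k = c0
      · refine ⟨⟨c0.val, by have := c0.isLt; omega⟩, ?_⟩
        rw [Hpos _ c0.isLt (Fin.ext rfl)]
        exact Set.mem_insert_of_mem _ (Set.mem_insert_of_mem _ (Or.inl (hkc ▸ hmem)))
      · refine ⟨⟨k.val, by have := k.isLt; omega⟩, ?_⟩
        rw [Hx _ k.isLt (by simpa using hkc)]
        exact Set.mem_insert_of_mem _ (Set.mem_insert_of_mem _ (Or.inl hmem))
    rcases u with a | b
    · exact cover_left a
    · exact cover_right b
end

section
/- Let G be a bipartite graph with parts V₁, V₂, each of size n, suppose r ∈ V₁ and b ∈ V₂ are non-adjacent, and suppose every vertex of G has at least two non-neighbours in the opposite part. Define X = V₁ \ (N(b) ∪ {r}) and Y = V₂ \ (N(r) ∪ {b}) (both non-empty). Colour red: all edges from r to N(r), all edges between X and N(r), and all edges between Y and N(b); colour blue: all edges from b to N(b), all edges between N(r) and N(b), and all edges between X and Y. Then in this 2-colouring, no two monochromatic components cover all of V(G); in particular tc₂(G) ≥ 3. -/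
private lemma reach_mono' {V : Type*} {G : SimpleGraph V} (H : G.Subgraph) (S : Set V)
    (hstep : ∀ x y : V, H.Adj x y → x ∈ S → y ∈ S) :
    ∀ {u v : H.verts} (_ : H.coe.Walk u v), (u : V) ∈ S → (v : V) ∈ S := by
  intro u v w
  induction w with
  | nil => exact id
  | cons h' p ih => exact fun hu => ih (hstep _ _ h' hu)

/-- The colouring of a bipartite graph `G` (with parts of size `n`) built from a non-edge
`rb`: red edges are those between `{r} ∪ X` and `N(r)` and those between `N(b)` and `Y`,
all remaining edges being blue, where `X = V₁ \ (N(b) ∪ {r})` and `Y = V₂ \ (N(r) ∪ {b})`.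
In this colouring no two monochromatic components cover all of `V(G)`; in particular
`tc₂(G) ≥ 3`. -/
theorem no_two_component_cover {V : Type*} [Fintype V] [DecidableEq V]
    (G : SimpleGraph V) [DecidableRel G.Adj]
    (V₁ V₂ : Finset V) (n : ℕ)
    (hpart : V₁ ∪ V₂ = Finset.univ) (hdisj : Disjoint V₁ V₂)
    (hV₁ : V₁.card = n) (hV₂ : V₂.card = n)
    (hbip : ∀ x y, G.Adj x y → (x ∈ V₁ ∧ y ∈ V₂) ∨ (x ∈ V₂ ∧ y ∈ V₁))
    (r b : V) (hr : r ∈ V₁) (hb : b ∈ V₂) (hrb : ¬ G.Adj r b)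
    (hnon₁ : ∀ v ∈ V₁, 2 ≤ (V₂.filter (fun w => ¬ G.Adj v w)).card)
    (hnon₂ : ∀ v ∈ V₂, 2 ≤ (V₁.filter (fun w => ¬ G.Adj v w)).card)
    (X Y : Finset V)
    (hX : X = V₁ \ insert r (V₁.filter (fun x => G.Adj b x)))
    (hY : Y = V₂ \ insert b (V₂.filter (fun y => G.Adj r y)))
    (c : Sym2 V → Fin 2)
    (hc : ∀ x y, G.Adj x y → (c s(x, y) = 0 ↔
      ((x = r ∨ x ∈ X) ∧ G.Adj r y) ∨ ((y = r ∨ y ∈ X) ∧ G.Adj r x) ∨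
      (G.Adj b x ∧ y ∈ Y) ∨ (G.Adj b y ∧ x ∈ Y))) :
    ¬ MonoCover G c 2 := by
  rintro ⟨H, hconn, hmono, hcov⟩
  classical
  -- basic part facts
  have hdj : ∀ v : V, v ∈ V₁ → v ∈ V₂ → False := fun v h1 h2 =>
    Finset.disjoint_left.mp hdisj h1 h2
  have hsame₁ : ∀ u v, u ∈ V₁ → v ∈ V₁ → ¬ G.Adj u v := by
    intro u v hu hv h
    rcases hbip u v h with ⟨_, h2⟩ | ⟨h2, _⟩
    · exact hdj v hv h2
    · exact hdj u hu h2
  have hsame₂ : ∀ u v, u ∈ V₂ → v ∈ V₂ → ¬ G.Adj u v := by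
    intro u v hu hv h
    rcases hbip u v h with ⟨h2, _⟩ | ⟨_, h2⟩
    · exact hdj u h2 hu
    · exact hdj v h2 hv
  have hXmem : ∀ x ∈ X, x ∈ V₁ ∧ x ≠ r ∧ ¬ G.Adj b x := by
    intro x hx
    rw [hX, Finset.mem_sdiff, Finset.mem_insert, Finset.mem_filter] at hx
    push_neg at hx
    exact ⟨hx.1, hx.2.1, fun h => hx.2.2 hx.1 h⟩
  have hYmem : ∀ y ∈ Y, y ∈ V₂ ∧ y ≠ b ∧ ¬ G.Adj r y := by
    intro y hy
    rw [hY, Finset.mem_sdiff, Finset.mem_insert, Finset.mem_filter] at hy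
    push_neg at hy
    exact ⟨hy.1, hy.2.1, fun h => hy.2.2 hy.1 h⟩
  have hV₁dec : ∀ v ∈ V₁, v = r ∨ G.Adj b v ∨ v ∈ X := by
    intro v hv
    by_cases hvX : v ∈ X
    · exact Or.inr (Or.inr hvX)
    · rw [hX, Finset.mem_sdiff, not_and, not_not] at hvX
      rcases Finset.mem_insert.mp (hvX hv) with h | h
      · exact Or.inl h
      · exact Or.inr (Or.inl (Finset.mem_filter.mp h).2)
  have hV₂dec : ∀ v ∈ V₂, v = b ∨ G.Adj r v ∨ v ∈ Y := by
    intro v hv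
    by_cases hvY : v ∈ Y
    · exact Or.inr (Or.inr hvY)
    · rw [hY, Finset.mem_sdiff, not_and, not_not] at hvY
      rcases Finset.mem_insert.mp (hvY hv) with h | h
      · exact Or.inl h
      · exact Or.inr (Or.inl (Finset.mem_filter.mp h).2)
  -- the four regions
  set A : Set V := {v | v = r ∨ v ∈ X ∨ G.Adj r v} with hA
  set B : Set V := {v | G.Adj b v ∨ v ∈ Y} with hB
  set C : Set V := {v | v = b ∨ G.Adj b v ∨ G.Adj r v} with hCdef
  set D : Set V := {v | v ∈ X ∨ v ∈ Y} with hD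
  have hAdjr₂ : ∀ v, G.Adj r v → v ∈ V₂ := by
    intro v h
    rcases hbip r v h with ⟨_, h2⟩ | ⟨h2, _⟩
    · exact h2
    · exact absurd h2 (fun h2 => hdj r hr h2)
  have hAdjb₁ : ∀ v, G.Adj b v → v ∈ V₁ := by
    intro v h
    rcases hbip b v h with ⟨h2, _⟩ | ⟨_, h2⟩
    · exact absurd h2 (fun h2 => hdj b h2 hb)
    · exact h2
  have hAB : ∀ v, v ∈ A → v ∈ B → False := by
    rintro v (rfl | hvX | hvr) (hvb | hvY)
    · exact hrb (hvb.symm)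
    · exact hdj v hr (hYmem v hvY).1
    · exact (hXmem v hvX).2.2 hvb
    · exact hdj v (hXmem v hvX).1 (hYmem v hvY).1
    · exact hdj v (hAdjb₁ v hvb) (hAdjr₂ v hvr)
    · exact (hYmem v hvY).2.2 hvr
  have hCD : ∀ v, v ∈ C → v ∈ D → False := by
    rintro v (rfl | hvb | hvr) (hvX | hvY)
    · exact hdj v (hXmem v hvX).1 hb
    · exact (hYmem v hvY).2.1 rfl
    · exact (hXmem v hvX).2.2 hvb
    · exact hdj v (hAdjb₁ v hvb) (hYmem v hvY).1
    · exact hdj v (hXmem v hvX).1 (hAdjr₂ v hvr)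
    · exact (hYmem v hvY).2.2 hvr
  -- edge lemmas
  have hred : ∀ x y, G.Adj x y → c s(x, y) = 0 →
      (x ∈ A ∧ y ∈ A) ∨ (x ∈ B ∧ y ∈ B) := by
    intro x y hadj h0
    rcases (hc x y hadj).mp h0 with ⟨hx, hy⟩ | ⟨hy, hx⟩ | ⟨hx, hy⟩ | ⟨hy, hx⟩
    · exact Or.inl ⟨hx.imp id Or.inl, Or.inr (Or.inr hy)⟩
    · exact Or.inl ⟨Or.inr (Or.inr hx), hy.imp id Or.inl⟩
    · exact Or.inr ⟨Or.inl hx, Or.inr hy⟩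
    · exact Or.inr ⟨Or.inr hx, Or.inl hy⟩
  have hblue_aux : ∀ x y, x ∈ V₁ → y ∈ V₂ → G.Adj x y →
      ¬ (((x = r ∨ x ∈ X) ∧ G.Adj r y) ∨ ((y = r ∨ y ∈ X) ∧ G.Adj r x) ∨
        (G.Adj b x ∧ y ∈ Y) ∨ (G.Adj b y ∧ x ∈ Y)) →
      (x ∈ C ∧ y ∈ C) ∨ (x ∈ D ∧ y ∈ D) := by
    intro x y hx1 hy2 hadj hnred
    rcases hV₁dec x hx1 with rfl | hbx | hxX
    · rcases hV₂dec y hy2 with rfl | hry | hyY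
      · exact absurd hadj hrb
      · exact absurd (Or.inl ⟨Or.inl rfl, hry⟩) hnred
      · exact absurd hadj (hYmem y hyY).2.2
    · rcases hV₂dec y hy2 with rfl | hry | hyY
      · exact Or.inl ⟨Or.inr (Or.inl hbx), Or.inl rfl⟩
      · exact Or.inl ⟨Or.inr (Or.inl hbx), Or.inr (Or.inr hry)⟩
      · exact absurd (Or.inr (Or.inr (Or.inl ⟨hbx, hyY⟩))) hnred
    · rcases hV₂dec y hy2 with rfl | hry | hyY
      · exact absurd hadj.symm (hXmem x hxX).2.2
      · exact absurd (Or.inl ⟨Or.inr hxX, hry⟩) hnred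
      · exact Or.inr ⟨Or.inl hxX, Or.inr hyY⟩
  have hblue : ∀ x y, G.Adj x y → c s(x, y) ≠ 0 →
      (x ∈ C ∧ y ∈ C) ∨ (x ∈ D ∧ y ∈ D) := by
    intro x y hadj h0
    rcases hbip x y hadj with ⟨hx1, hy2⟩ | ⟨hx2, hy1⟩
    · exact hblue_aux x y hx1 hy2 hadj (fun h => h0 ((hc x y hadj).mpr h))
    · have h0' : c s(y, x) ≠ 0 := by rwa [Sym2.eq_swap]
      rcases hblue_aux y x hy1 hx2 hadj.symm
          (fun h => h0' ((hc y x hadj.symm).mpr h)) with ⟨h1, h2⟩ | ⟨h1, h2⟩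
      · exact Or.inl ⟨h2, h1⟩
      · exact Or.inr ⟨h2, h1⟩
  -- every vertex lies in A ∪ B ∪ C
  have hAll : ∀ v : V, v ∈ A ∨ v ∈ B ∨ v ∈ C := by
    intro v
    have hv : v ∈ V₁ ∪ V₂ := hpart ▸ Finset.mem_univ v
    rcases Finset.mem_union.mp hv with hv1 | hv2
    · rcases hV₁dec v hv1 with rfl | h | h
      · exact Or.inl (Or.inl rfl)
      · exact Or.inr (Or.inl (Or.inl h))
      · exact Or.inl (Or.inr (Or.inl h))
    · rcases hV₂dec v hv2 with rfl | h | h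
      · exact Or.inr (Or.inr (Or.inl rfl))
      · exact Or.inl (Or.inr (Or.inr h))
      · exact Or.inr (Or.inl (Or.inr h))
  -- a vertex y₀ ∈ Y
  have hy₀ : ∃ y₀, y₀ ∈ Y := by
    have h2 := hnon₁ r hr
    have h1 : 1 < (V₂.filter (fun w => ¬ G.Adj r w)).card := h2
    obtain ⟨a, ha, a', ha', hne⟩ := Finset.one_lt_card.mp h1
    have key : ∀ z, z ∈ V₂.filter (fun w => ¬ G.Adj r w) → z ≠ b → z ∈ Y := by
      intro z hz hzb
      rw [Finset.mem_filter] at hz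
      rw [hY, Finset.mem_sdiff, Finset.mem_insert, Finset.mem_filter]
      push_neg
      exact ⟨hz.1, hzb, fun _ => hz.2⟩
    by_cases hab : a = b
    · exact ⟨a', key a' ha' (fun h => hne (hab.trans h.symm))⟩
    · exact ⟨a, key a ha hab⟩
  obtain ⟨y₀, hy₀Y⟩ := hy₀
  -- non-membership facts for witnesses
  have hrB : r ∉ B := by
    rintro (h | h)
    · exact hrb h.symm
    · exact hdj r hr (hYmem r h).1
  have hrC : r ∉ C := by
    rintro (h | h | h)
    · exact hdj r hr (h ▸ hb)
    · exact hrb h.symm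
    · exact G.irrefl h
  have hrD : r ∉ D := by
    rintro (h | h)
    · exact (hXmem r h).2.1 rfl
    · exact hdj r hr (hYmem r h).1
  have hbA : b ∉ A := by
    rintro (h | h | h)
    · exact hdj b (h ▸ hr) hb
    · exact hdj b (hXmem b h).1 hb
    · exact hrb h
  have hbB : b ∉ B := by
    rintro (h | h)
    · exact G.irrefl h
    · exact (hYmem b h).2.1 rfl
  have hbD : b ∉ D := by
    rintro (h | h)
    · exact hdj b (hXmem b h).1 hb
    · exact (hYmem b h).2.1 rfl
  have hy₀A : y₀ ∉ A := by
    rintro (h | h | h)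
    · exact hdj r hr (h ▸ (hYmem y₀ hy₀Y).1)
    · exact hdj y₀ (hXmem y₀ h).1 (hYmem y₀ hy₀Y).1
    · exact (hYmem y₀ hy₀Y).2.2 h
  have hy₀C : y₀ ∉ C := by
    rintro (h | h | h)
    · exact (hYmem y₀ hy₀Y).2.1 h
    · exact hsame₂ b y₀ hb (hYmem y₀ hy₀Y).1 h
    · exact (hYmem y₀ hy₀Y).2.2 h
  -- each component is contained in one of the regions
  have hP : ∀ i, (∀ v ∈ (H i).verts, v ∈ A) ∨ (∀ v ∈ (H i).verts, v ∈ B) ∨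
      (∀ v ∈ (H i).verts, v ∈ C) ∨ (∀ v ∈ (H i).verts, v ∈ D) := by
    intro i
    obtain ⟨col, hcol⟩ := hmono i
    have hedgecol : ∀ x y, (H i).Adj x y → c s(x, y) = col := by
      intro x y h
      exact hcol _ (SimpleGraph.Subgraph.mem_edgeSet.mpr h)
    have hreach : ∀ (u v : (H i).verts), (H i).coe.Reachable u v :=
      (hconn i).preconnected
    have hcontain : ∀ (S : Set V), (∀ x y : V, (H i).Adj x y → x ∈ S → y ∈ S) →
        ∀ x₀, (hx₀ : x₀ ∈ (H i).verts) → x₀ ∈ S → ∀ v ∈ (H i).verts, v ∈ S := by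
      intro S hstep x₀ hx₀ hx₀S v hv
      obtain ⟨w⟩ := hreach ⟨x₀, hx₀⟩ ⟨v, hv⟩
      exact reach_mono' (H i) S hstep w hx₀S
    by_cases hedge : ∃ x y, (H i).Adj x y
    · obtain ⟨x, y, hxy⟩ := hedge
      have hxv : x ∈ (H i).verts := (H i).edge_vert hxy
      have hGxy : G.Adj x y := hxy.adj_sub
      by_cases hcol0 : col = 0
      · -- red component
        have hstepA : ∀ p q : V, (H i).Adj p q → p ∈ A → q ∈ A := by
          intro p q hpq hpA
          rcases hred p q hpq.adj_sub (hcol0 ▸ hedgecol p q hpq) with ⟨_, h⟩ | ⟨h1, _⟩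
          · exact h
          · exact absurd hpA (fun h => hAB p h h1)
        have hstepB : ∀ p q : V, (H i).Adj p q → p ∈ B → q ∈ B := by
          intro p q hpq hpB
          rcases hred p q hpq.adj_sub (hcol0 ▸ hedgecol p q hpq) with ⟨h1, _⟩ | ⟨_, h⟩
          · exact absurd hpB (fun h => hAB p h1 h)
          · exact h
        rcases hred x y hGxy (hcol0 ▸ hedgecol x y hxy) with ⟨hxA, _⟩ | ⟨hxB, _⟩
        · exact Or.inl (hcontain A hstepA x hxv hxA)
        · exact Or.inr (Or.inl (hcontain B hstepB x hxv hxB))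
      · -- blue component
        have hcne : ∀ p q : V, (H i).Adj p q → c s(p, q) ≠ 0 := by
          intro p q hpq h
          exact hcol0 ((hedgecol p q hpq) ▸ h)
        have hstepC : ∀ p q : V, (H i).Adj p q → p ∈ C → q ∈ C := by
          intro p q hpq hpC
          rcases hblue p q hpq.adj_sub (hcne p q hpq) with ⟨_, h⟩ | ⟨h1, _⟩
          · exact h
          · exact absurd hpC (fun h => hCD p h h1)
        have hstepD : ∀ p q : V, (H i).Adj p q → p ∈ D → q ∈ D := by
          intro p q hpq hpD
          rcases hblue p q hpq.adj_sub (hcne p q hpq) with ⟨h1, _⟩ | ⟨_, h⟩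
          · exact absurd hpD (fun h => hCD p h1 h)
          · exact h
        rcases hblue x y hGxy (hcne x y hxy) with ⟨hxC, _⟩ | ⟨hxD, _⟩
        · exact Or.inr (Or.inr (Or.inl (hcontain C hstepC x hxv hxC)))
        · exact Or.inr (Or.inr (Or.inr (hcontain D hstepD x hxv hxD)))
    · -- no edges: the component is a single vertex
      push_neg at hedge
      obtain ⟨v₀, hv₀⟩ := (hconn i).nonempty
      have hsingle : ∀ v ∈ (H i).verts, v = v₀ := by
        intro v hv
        have := hcontain {v₀} (fun x y h => absurd h (hedge x y)) v₀ hv₀ rfl v hv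
        exact this
      rcases hAll v₀ with h | h | h
      · exact Or.inl (fun v hv => (hsingle v hv) ▸ h)
      · exact Or.inr (Or.inl (fun v hv => (hsingle v hv) ▸ h))
      · exact Or.inr (Or.inr (Or.inl (fun v hv => (hsingle v hv) ▸ h)))
  -- finish: find an uncovered vertex for each pair of regions
  have key : ∀ (S T : Set V), (∀ v ∈ (H 0).verts, v ∈ S) → (∀ v ∈ (H 1).verts, v ∈ T) →
      ∀ w, w ∉ S → w ∉ T → False := by
    intro S T h0 h1 w hwS hwT
    obtain ⟨i, hi⟩ := hcov w
    fin_cases i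
    · exact hwS (h0 _ hi)
    · exact hwT (h1 _ hi)
  rcases hP 0 with h0 | h0 | h0 | h0 <;> rcases hP 1 with h1 | h1 | h1 | h1
  · exact key _ _ h0 h1 b hbA hbA
  · exact key _ _ h0 h1 b hbA hbB
  · exact key _ _ h0 h1 y₀ hy₀A hy₀C
  · exact key _ _ h0 h1 b hbA hbD
  · exact key _ _ h0 h1 b hbB hbA
  · exact key _ _ h0 h1 r hrB hrB
  · exact key _ _ h0 h1 r hrB hrC
  · exact key _ _ h0 h1 r hrB hrD
  · exact key _ _ h0 h1 y₀ hy₀C hy₀A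
  · exact key _ _ h0 h1 r hrC hrB
  · exact key _ _ h0 h1 r hrC hrC
  · exact key _ _ h0 h1 r hrC hrD
  · exact key _ _ h0 h1 b hbD hbA
  · exact key _ _ h0 h1 r hrD hrB
  · exact key _ _ h0 h1 r hrD hrC
  · exact key _ _ h0 h1 r hrD hrD
end

section
/- Let G be a bipartite graph with parts V₁, V₂ and suppose there exist vertices u₁, v₁ ∈ V₁ with no common neighbour, and u₂, v₂ ∈ V₂ \ (N(u₁) ∪ N(v₁)) with no common neighbour. Colour red every edge incident to one of u₁, v₁, u₂, v₂, and blue all remaining edges. Then u₁, v₁, u₂, v₂ lie in four pairwise distinct red components and none of them lies in any blue component, so every cover of V(G) by monochromatic components uses at least four components; hence tc₂(G) ≥ 4. -/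
/-- The red edges incident to a special vertex `s` form a star whose leaf set is
closed under red edges, and which avoids the other three special vertices. -/
lemma star_lemma {V : Type*} (G : SimpleGraph V) (A B : Set V)
    (hdisj : Disjoint A B)
    (hbip : ∀ x y, G.Adj x y → (x ∈ A ∧ y ∈ B) ∨ (x ∈ B ∧ y ∈ A))
    (s t o₁ o₂ : V) (hs : s ∈ A) (ht : t ∈ A) (ho₁ : o₁ ∈ B) (ho₂ : o₂ ∈ B)
    (hst : s ≠ t)
    (hcn : ∀ w, ¬ (G.Adj s w ∧ G.Adj t w))
    (hso₁ : ¬ G.Adj s o₁) (hso₂ : ¬ G.Adj s o₂)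
    (c : Sym2 V → Fin 2)
    (hc : ∀ x y, G.Adj x y → c s(x, y) = 0 →
      (x = s ∨ x = t ∨ x = o₁ ∨ x = o₂) ∨ (y = s ∨ y = t ∨ y = o₁ ∨ y = o₂)) :
    (∀ x y, x ∈ insert s (G.neighborSet s) → G.Adj x y → c s(x, y) = 0 →
      y ∈ insert s (G.neighborSet s)) ∧
    t ∉ insert s (G.neighborSet s) ∧
    o₁ ∉ insert s (G.neighborSet s) ∧ o₂ ∉ insert s (G.neighborSet s) := by
  have hAnB : ∀ a, a ∈ A → a ∉ B := fun a ha => Set.disjoint_left.mp hdisj ha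
  have hBnA : ∀ a, a ∈ B → a ∉ A := fun a ha => Set.disjoint_right.mp hdisj ha
  have hnb : ∀ x, G.Adj s x → x ∈ B := by
    intro x h
    rcases hbip s x h with ⟨_, hx⟩ | ⟨hsB, _⟩
    · exact hx
    · exact absurd hsB (hAnB s hs)
  have hAdjst : ¬ G.Adj s t := fun h => hAnB t ht (hnb t h)
  refine ⟨?_, ?_, ?_, ?_⟩
  · intro x y hx hxy h0
    rcases hx with rfl | hx
    · exact Set.mem_insert_iff.mpr (Or.inr hxy)
    · -- x is a neighbour of s
      have hsx : G.Adj s x := hx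
      have hxB : x ∈ B := hnb x hsx
      have hxns : x ≠ s := fun h => G.loopless.irrefl s (h ▸ hsx)
      have hxnt : x ≠ t := fun h => hAdjst (h ▸ hsx)
      have hxno₁ : x ≠ o₁ := fun h => hso₁ (h ▸ hsx)
      have hxno₂ : x ≠ o₂ := fun h => hso₂ (h ▸ hsx)
      rcases hc x y hxy h0 with (h | h | h | h) | (h | h | h | h)
      · exact absurd h hxns
      · exact absurd h hxnt
      · exact absurd h hxno₁
      · exact absurd h hxno₂
      · rw [h]; exact Set.mem_insert s _
      · exact absurd ⟨hsx, h ▸ hxy.symm⟩ (hcn x)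
      · subst h
        rcases hbip x y hxy with ⟨hxA, _⟩ | ⟨_, hh⟩
        · exact absurd hxA (hBnA x hxB)
        · exact absurd hh (hBnA y ho₁)
      · subst h
        rcases hbip x y hxy with ⟨hxA, _⟩ | ⟨_, hh⟩
        · exact absurd hxA (hBnA x hxB)
        · exact absurd hh (hBnA y ho₂)
  · intro h
    rcases h with h | h
    · exact hst h.symm
    · exact hAdjst h
  · intro h
    rcases h with h | h
    · exact hBnA o₁ ho₁ (h ▸ hs)
    · exact hso₁ h
  · intro h
    rcases h with h | h
    · exact hBnA o₂ ho₂ (h ▸ hs)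
    · exact hso₂ h

/-- Two distinct vertices in a connected monochromatic subgraph, where all edges at `s`
are red, the red star at `s` is closed, and `t` is outside it: contradiction. -/
lemma pair_in_component {V : Type*} (G : SimpleGraph V) (c : Sym2 V → Fin 2)
    (Hi : G.Subgraph) (hconn : Hi.Connected) (col : Fin 2)
    (hcol : ∀ e ∈ Hi.edgeSet, c e = col) (s t : V)
    (hs : s ∈ Hi.verts) (ht : t ∈ Hi.verts) (hst : s ≠ t)
    (hreds : ∀ y, G.Adj s y → c s(s, y) = 0)
    (hclosed : ∀ x y, x ∈ insert s (G.neighborSet s) → G.Adj x y → c s(x, y) = 0 →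
      y ∈ insert s (G.neighborSet s))
    (htn : t ∉ insert s (G.neighborSet s)) : False := by
  obtain ⟨w⟩ := hconn.preconnected ⟨s, hs⟩ ⟨t, ht⟩
  have hne' : (⟨s, hs⟩ : Hi.verts) ≠ ⟨t, ht⟩ := fun h => hst (congrArg Subtype.val h)
  have hcol0 : col = 0 := by
    cases w with
    | nil => exact absurd rfl hne'
    | cons h p =>
      have hadj : Hi.Adj s _ := h
      exact ((hcol _ (SimpleGraph.Subgraph.mem_edgeSet.mpr hadj)).symm).trans (hreds _ hadj.adj_sub)
  have key : ∀ {x y : Hi.verts} (p : Hi.coe.Walk x y),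
      (x : V) ∈ insert s (G.neighborSet s) → (y : V) ∈ insert s (G.neighborSet s) := by
    intro x y p
    induction p with
    | nil => exact id
    | cons hab pbd ih =>
      intro hx
      apply ih
      have hadj : Hi.Adj _ _ := hab
      exact hclosed _ _ hx hadj.adj_sub ((hcol _ (SimpleGraph.Subgraph.mem_edgeSet.mpr hadj)).trans hcol0)
  exact htn (key w (Set.mem_insert s _))

/-- If `u₁, v₁ ∈ V₁` have no common neighbour, `u₂, v₂ ∈ V₂ \ (N(u₁) ∪ N(v₁))` have no
common neighbour, and all edges incident to one of these four vertices are coloured red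
while all other edges are blue, then `V(G)` cannot be covered by three monochromatic
components; hence `tc₂(G) ≥ 4`. -/
theorem no_three_component_cover {V : Type*}
    (G : SimpleGraph V) (V₁ V₂ : Set V)
    (hpart : V₁ ∪ V₂ = Set.univ) (hdisj : Disjoint V₁ V₂)
    (hbip : ∀ x y, G.Adj x y → (x ∈ V₁ ∧ y ∈ V₂) ∨ (x ∈ V₂ ∧ y ∈ V₁))
    (u₁ v₁ : V) (hu₁ : u₁ ∈ V₁) (hv₁ : v₁ ∈ V₁) (hne₁ : u₁ ≠ v₁)
    (hcn₁ : ∀ w, ¬ (G.Adj u₁ w ∧ G.Adj v₁ w))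
    (u₂ v₂ : V) (hu₂ : u₂ ∈ V₂) (hv₂ : v₂ ∈ V₂) (hne₂ : u₂ ≠ v₂)
    (hu₂n : ¬ G.Adj u₁ u₂ ∧ ¬ G.Adj v₁ u₂)
    (hv₂n : ¬ G.Adj u₁ v₂ ∧ ¬ G.Adj v₁ v₂)
    (hcn₂ : ∀ w, ¬ (G.Adj u₂ w ∧ G.Adj v₂ w))
    (c : Sym2 V → Fin 2)
    (hc : ∀ x y, G.Adj x y → (c s(x, y) = 0 ↔
      x ∈ ({u₁, v₁, u₂, v₂} : Set V) ∨ y ∈ ({u₁, v₁, u₂, v₂} : Set V))) :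
    ¬ MonoCover G c 3 := by
  rintro ⟨H, hconn, hcol, hcov⟩
  have hd : ∀ a b, a ∈ V₁ → b ∈ V₂ → a ≠ b :=
    fun a b ha hb h => Set.disjoint_left.mp hdisj ha (h ▸ hb)
  have hc0 : ∀ x y, G.Adj x y → c s(x, y) = 0 →
      (x = u₁ ∨ x = v₁ ∨ x = u₂ ∨ x = v₂) ∨ (y = u₁ ∨ y = v₁ ∨ y = u₂ ∨ y = v₂) := by
    intro x y h h0
    have := (hc x y h).mp h0
    simpa using this
  have hbip' : ∀ x y, G.Adj x y → (x ∈ V₂ ∧ y ∈ V₁) ∨ (x ∈ V₁ ∧ y ∈ V₂) :=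
    fun x y h => (hbip x y h).symm
  -- forward colouring facts
  have hredu₁ : ∀ y, G.Adj u₁ y → c s(u₁, y) = 0 :=
    fun y h => (hc u₁ y h).mpr (Or.inl (by simp))
  have hredv₁ : ∀ y, G.Adj v₁ y → c s(v₁, y) = 0 :=
    fun y h => (hc v₁ y h).mpr (Or.inl (by simp))
  have hredu₂ : ∀ y, G.Adj u₂ y → c s(u₂, y) = 0 :=
    fun y h => (hc u₂ y h).mpr (Or.inl (by simp))
  have hredv₂ : ∀ y, G.Adj v₂ y → c s(v₂, y) = 0 :=
    fun y h => (hc v₂ y h).mpr (Or.inl (by simp))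
  -- the four star lemmas
  have S1 := star_lemma G V₁ V₂ hdisj hbip u₁ v₁ u₂ v₂ hu₁ hv₁ hu₂ hv₂ hne₁ hcn₁
    hu₂n.1 hv₂n.1 c (fun x y h h0 => by have := hc0 x y h h0; tauto)
  have S2 := star_lemma G V₁ V₂ hdisj hbip v₁ u₁ u₂ v₂ hv₁ hu₁ hu₂ hv₂ hne₁.symm
    (fun w hw => hcn₁ w ⟨hw.2, hw.1⟩) hu₂n.2 hv₂n.2 c
    (fun x y h h0 => by have := hc0 x y h h0; tauto)
  have S3 := star_lemma G V₂ V₁ hdisj.symm hbip' u₂ v₂ u₁ v₁ hu₂ hv₂ hu₁ hv₁ hne₂ hcn₂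
    (fun h => hu₂n.1 h.symm) (fun h => hu₂n.2 h.symm) c
    (fun x y h h0 => by have := hc0 x y h h0; tauto)
  have S4 := star_lemma G V₂ V₁ hdisj.symm hbip' v₂ u₂ u₁ v₁ hv₂ hu₂ hu₁ hv₁ hne₂.symm
    (fun w hw => hcn₂ w ⟨hw.2, hw.1⟩) (fun h => hv₂n.1 h.symm) (fun h => hv₂n.2 h.symm) c
    (fun x y h h0 => by have := hc0 x y h h0; tauto)
  -- the six pairwise impossibilities
  have p12 : ∀ i, u₁ ∈ (H i).verts → v₁ ∈ (H i).verts → False := by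
    intro i h1 h2
    obtain ⟨col, hcoli⟩ := hcol i
    exact pair_in_component G c (H i) (hconn i) col hcoli u₁ v₁ h1 h2 hne₁ hredu₁ S1.1 S1.2.1
  have p13 : ∀ i, u₁ ∈ (H i).verts → u₂ ∈ (H i).verts → False := by
    intro i h1 h2
    obtain ⟨col, hcoli⟩ := hcol i
    exact pair_in_component G c (H i) (hconn i) col hcoli u₁ u₂ h1 h2 (hd _ _ hu₁ hu₂)
      hredu₁ S1.1 S1.2.2.1
  have p14 : ∀ i, u₁ ∈ (H i).verts → v₂ ∈ (H i).verts → False := by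
    intro i h1 h2
    obtain ⟨col, hcoli⟩ := hcol i
    exact pair_in_component G c (H i) (hconn i) col hcoli u₁ v₂ h1 h2 (hd _ _ hu₁ hv₂)
      hredu₁ S1.1 S1.2.2.2
  have p23 : ∀ i, v₁ ∈ (H i).verts → u₂ ∈ (H i).verts → False := by
    intro i h1 h2
    obtain ⟨col, hcoli⟩ := hcol i
    exact pair_in_component G c (H i) (hconn i) col hcoli v₁ u₂ h1 h2 (hd _ _ hv₁ hu₂)
      hredv₁ S2.1 S2.2.2.1
  have p24 : ∀ i, v₁ ∈ (H i).verts → v₂ ∈ (H i).verts → False := by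
    intro i h1 h2
    obtain ⟨col, hcoli⟩ := hcol i
    exact pair_in_component G c (H i) (hconn i) col hcoli v₁ v₂ h1 h2 (hd _ _ hv₁ hv₂)
      hredv₁ S2.1 S2.2.2.2
  have p34 : ∀ i, u₂ ∈ (H i).verts → v₂ ∈ (H i).verts → False := by
    intro i h1 h2
    obtain ⟨col, hcoli⟩ := hcol i
    exact pair_in_component G c (H i) (hconn i) col hcoli u₂ v₂ h1 h2 hne₂ hredu₂ S3.1 S3.2.1
  -- pigeonhole
  obtain ⟨i₁, h₁⟩ := hcov u₁
  obtain ⟨i₂, h₂⟩ := hcov v₁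
  obtain ⟨i₃, h₃⟩ := hcov u₂
  obtain ⟨i₄, h₄⟩ := hcov v₂
  have hpig : i₁ = i₂ ∨ i₁ = i₃ ∨ i₁ = i₄ ∨ i₂ = i₃ ∨ i₂ = i₄ ∨ i₃ = i₄ := by
    omega
  rcases hpig with h | h | h | h | h | h
  · exact p12 i₂ (h ▸ h₁) h₂
  · exact p13 i₃ (h ▸ h₁) h₃
  · exact p14 i₄ (h ▸ h₁) h₄
  · exact p23 i₃ (h ▸ h₂) h₃
  · exact p24 i₄ (h ▸ h₂) h₄
  · exact p34 i₄ (h ▸ h₃) h₄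
end

section
/- Let 0 < ε < 1 and p ∈ (0,1), and let G be a bipartite graph with parts V₁, V₂ of size n such that for all sets A ⊆ V₁ and B ⊆ V₂ with |A|, |B| ≥ pn/2, one has e(A,B) ≤ p|A||B| + δpn|A| and e(A,B) ≤ p|A||B| + δpn|B|, where 0 < δ and δ is sufficiently small compared to ε (say δ ≤ ε/4). Then every spanning subgraph H ⊆ G with minimum degree δ(H) ≥ (1/2 + ε)pn is connected. -/
open Finset

lemma card_filter_product_eq_sum {α β : Type*} [DecidableEq α] (X : Finset α) (Y : Finset β)
    (r : α → β → Prop) [∀ x y, Decidable (r x y)] :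
    ((X ×ˢ Y).filter fun q => r q.1 q.2).card = ∑ x ∈ X, (Y.filter fun y => r x y).card := by
  classical
  rw [show ((X ×ˢ Y).filter fun q => r q.1 q.2) = Rel.interedges r X Y from rfl,
    Rel.interedges_eq_biUnion, Finset.card_biUnion]
  · simp
  · intro x hx x' hx' hxx
    rw [Function.onFun, Finset.disjoint_left]
    intro a ha ha'
    simp only [Finset.mem_map, Function.Embedding.coeFn_mk] at ha ha'
    obtain ⟨y, _, rfl⟩ := ha
    obtain ⟨y', _, h⟩ := ha'
    exact hxx (by simpa using congrArg Prod.fst h.symm)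

lemma card_filter_product_eq_sum' {α β : Type*} [DecidableEq β] (X : Finset α) (Y : Finset β)
    (r : α → β → Prop) [∀ x y, Decidable (r x y)] :
    ((X ×ˢ Y).filter fun q => r q.1 q.2).card = ∑ y ∈ Y, (X.filter fun x => r x y).card := by
  classical
  rw [← card_filter_product_eq_sum Y X (fun y x => r x y)]
  apply Finset.card_nbij' Prod.swap Prod.swap <;>
    simp +contextual [Set.MapsTo, Set.LeftInvOn, Set.RightInvOn, Set.EqOn, Finset.mem_product, and_comm, and_left_comm]


/-- If a bipartite graph `G` with parts of size `n` satisfies the upper-regularity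
condition `e(A,B) ≤ p|A||B| + δpn·min(|A|,|B|)`-style bounds for all large sets `A, B`,
with `δ ≤ ε/4`, then every spanning subgraph `H ⊆ G` of minimum degree at least
`(1/2 + ε)pn` is connected. -/
theorem min_degree_subgraph_connected {V : Type*} [Fintype V] [DecidableEq V]
    (G : SimpleGraph V) [DecidableRel G.Adj]
    (V₁ V₂ : Finset V) (n : ℕ) (hn : 0 < n)
    (hpart : V₁ ∪ V₂ = Finset.univ) (hdisj : Disjoint V₁ V₂)
    (hV₁ : V₁.card = n) (hV₂ : V₂.card = n)
    (hbip : ∀ x y, G.Adj x y → (x ∈ V₁ ∧ y ∈ V₂) ∨ (x ∈ V₂ ∧ y ∈ V₁))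
    (p ε δ : ℝ) (hp0 : 0 < p) (hp1 : p < 1) (hε0 : 0 < ε) (hε1 : ε < 1)
    (hδ0 : 0 < δ) (hδε : δ ≤ ε / 4)
    (hreg : ∀ A ⊆ V₁, ∀ B ⊆ V₂,
      (p * n / 2 ≤ (A.card : ℝ)) → (p * n / 2 ≤ (B.card : ℝ)) →
      ((((A ×ˢ B).filter (fun q => G.Adj q.1 q.2)).card : ℝ) ≤
          p * A.card * B.card + δ * p * n * A.card ∧
        (((A ×ˢ B).filter (fun q => G.Adj q.1 q.2)).card : ℝ) ≤
          p * A.card * B.card + δ * p * n * B.card)) :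
    ∀ H : SimpleGraph V, H ≤ G →
      (∀ v : V, (1 / 2 + ε) * p * n ≤ ((H.neighborSet v).ncard : ℝ)) →
      H.Connected := by
  intro H hHG hdeg
  classical
  have hn' : (0:ℝ) < n := by exact_mod_cast hn
  have hd0 : (0:ℝ) < (1/2+ε)*p*n := by positivity
  have hpn2 : p * n / 2 ≤ (1/2+ε)*p*n := by nlinarith
  -- opposite-side facts
  have hopp1 : ∀ x y, x ∈ V₁ → H.Adj x y → y ∈ V₂ := by
    intro x y hx hxy
    rcases hbip x y (hHG hxy) with ⟨h1, h2⟩ | ⟨h1, h2⟩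
    · exact h2
    · exact absurd hx (Finset.disjoint_right.mp hdisj h1)
  have hopp2 : ∀ x y, x ∈ V₂ → H.Adj x y → y ∈ V₁ := by
    intro x y hx hxy
    rcases hbip x y (hHG hxy) with ⟨h1, h2⟩ | ⟨h1, h2⟩
    · exact absurd hx (Finset.disjoint_left.mp hdisj h1)
    · exact h2
  -- the key claim
  have key : ∀ u : V, (n:ℝ)/2 < ((V₁.filter fun w => H.Reachable u w).card : ℝ) := by
    intro u
    set X := V₁.filter fun w => H.Reachable u w with hX
    set Y := V₂.filter fun w => H.Reachable u w with hY
    have hXsub : X ⊆ V₁ := Finset.filter_subset _ _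
    have hYsub : Y ⊆ V₂ := Finset.filter_subset _ _
    have hXnbr : ∀ x ∈ X, H.neighborSet x ⊆ ↑(Y.filter fun y => G.Adj x y) := by
      intro x hx y hy
      rw [Finset.mem_filter] at hx
      rw [Finset.mem_coe, Finset.mem_filter]
      exact ⟨Finset.mem_filter.mpr ⟨hopp1 x y hx.1 hy, hx.2.trans hy.reachable⟩, hHG hy⟩
    have hYnbr : ∀ y ∈ Y, H.neighborSet y ⊆ ↑(X.filter fun x => G.Adj x y) := by
      intro y hy x hx
      rw [Finset.mem_filter] at hy
      rw [Finset.mem_coe, Finset.mem_filter]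
      exact ⟨Finset.mem_filter.mpr ⟨hopp2 y x hy.1 hx, hy.2.trans hx.reachable⟩, hHG hx.symm⟩
    have hdegX : ∀ x ∈ X, (1/2+ε)*p*n ≤ ((Y.filter fun y => G.Adj x y).card : ℝ) := by
      intro x hx
      refine le_trans (hdeg x) ?_
      have := Set.ncard_le_ncard (hXnbr x hx) (Finset.finite_toSet _)
      rw [Set.ncard_coe_finset] at this
      exact_mod_cast this
    have hdegY : ∀ y ∈ Y, (1/2+ε)*p*n ≤ ((X.filter fun x => G.Adj x y).card : ℝ) := by
      intro y hy
      refine le_trans (hdeg y) ?_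
      have := Set.ncard_le_ncard (hYnbr y hy) (Finset.finite_toSet _)
      rw [Set.ncard_coe_finset] at this
      exact_mod_cast this
    -- nonemptiness and size pn/2 bounds
    have hXofY : Y.Nonempty → (1/2+ε)*p*n ≤ (X.card : ℝ) := by
      rintro ⟨y, hy⟩
      exact le_trans (hdegY y hy) (by exact_mod_cast Finset.card_le_card (Finset.filter_subset _ _))
    have hYofX : X.Nonempty → (1/2+ε)*p*n ≤ (Y.card : ℝ) := by
      rintro ⟨x, hx⟩
      exact le_trans (hdegX x hx) (by exact_mod_cast Finset.card_le_card (Finset.filter_subset _ _))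
    have hXY : (1/2+ε)*p*n ≤ (X.card : ℝ) ∧ (1/2+ε)*p*n ≤ (Y.card : ℝ) := by
      have hu : u ∈ V₁ ∪ V₂ := hpart ▸ Finset.mem_univ u
      rcases Finset.mem_union.mp hu with hu | hu
      · have hXne : X.Nonempty := ⟨u, Finset.mem_filter.mpr ⟨hu, SimpleGraph.Reachable.refl u⟩⟩
        have h2 := hYofX hXne
        have hYne : Y.Nonempty := by
          rw [← Finset.card_pos]
          by_contra h
          push_neg at h
          interval_cases h' : Y.card
          · simp [h'] at h2; linarith
        exact ⟨hXofY hYne, h2⟩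
      · have hYne : Y.Nonempty := ⟨u, Finset.mem_filter.mpr ⟨hu, SimpleGraph.Reachable.refl u⟩⟩
        have h2 := hXofY hYne
        have hXne : X.Nonempty := by
          rw [← Finset.card_pos]
          by_contra h
          push_neg at h
          interval_cases h' : X.card
          · simp [h'] at h2; linarith
        exact ⟨h2, hYofX hXne⟩
    have hXc : p * n / 2 ≤ (X.card : ℝ) := le_trans hpn2 hXY.1
    have hYc : p * n / 2 ≤ (Y.card : ℝ) := le_trans hpn2 hXY.2
    have hXpos : (0:ℝ) < X.card := lt_of_lt_of_le hd0 hXY.1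
    have hYpos : (0:ℝ) < Y.card := lt_of_lt_of_le hd0 hXY.2
    obtain ⟨hup1, hup2⟩ := hreg X hXsub Y hYsub hXc hYc
    -- lower bounds on the edge count
    have hlow1 : (1/2+ε)*p*n * (X.card : ℝ) ≤
        ((((X ×ˢ Y).filter (fun q => G.Adj q.1 q.2)).card : ℝ)) := by
      rw [card_filter_product_eq_sum X Y (fun x y => G.Adj x y)]
      push_cast
      calc (1/2+ε)*p*n * (X.card : ℝ) = ∑ _x ∈ X, (1/2+ε)*p*n := by
            rw [Finset.sum_const, nsmul_eq_mul]; ring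
        _ ≤ ∑ x ∈ X, ((Y.filter fun y => G.Adj x y).card : ℝ) :=
            Finset.sum_le_sum hdegX
    have hlow2 : (1/2+ε)*p*n * (Y.card : ℝ) ≤
        ((((X ×ˢ Y).filter (fun q => G.Adj q.1 q.2)).card : ℝ)) := by
      rw [card_filter_product_eq_sum' X Y (fun x y => G.Adj x y)]
      push_cast
      calc (1/2+ε)*p*n * (Y.card : ℝ) = ∑ _y ∈ Y, (1/2+ε)*p*n := by
            rw [Finset.sum_const, nsmul_eq_mul]; ring
        _ ≤ ∑ y ∈ Y, ((X.filter fun x => G.Adj x y).card : ℝ) :=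
            Finset.sum_le_sum hdegY
    -- conclude |X| > n/2
    have h1 : (1/2+ε)*p*n * (Y.card : ℝ) ≤ p * X.card * Y.card + δ*p*n*(Y.card : ℝ) :=
      le_trans hlow2 hup2
    have h3 : ((1/2+ε)*(n:ℝ)) * (p * (Y.card : ℝ)) ≤ ((X.card : ℝ) + δ*n) * (p * (Y.card : ℝ)) := by
      nlinarith [h1]
    have h4 : (1/2+ε)*(n:ℝ) ≤ (X.card : ℝ) + δ*n :=
      le_of_mul_le_mul_right h3 (mul_pos hp0 hYpos)
    nlinarith [mul_pos hε0 hn']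
  -- connectivity
  rw [SimpleGraph.connected_iff]
  constructor
  · intro u v
    have hu := key u
    have hv := key v
    have hinter : ((V₁.filter fun w => H.Reachable u w) ∩
        (V₁.filter fun w => H.Reachable v w)).Nonempty := by
      by_contra h
      rw [Finset.not_nonempty_iff_eq_empty, ← Finset.disjoint_iff_inter_eq_empty] at h
      have hcard := Finset.card_union_of_disjoint h
      have hsub : (V₁.filter fun w => H.Reachable u w) ∪
          (V₁.filter fun w => H.Reachable v w) ⊆ V₁ :=
        Finset.union_subset (Finset.filter_subset _ _) (Finset.filter_subset _ _)
      have := Finset.card_le_card hsub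
      rw [hcard, hV₁] at this
      have : ((V₁.filter fun w => H.Reachable u w).card : ℝ) +
          ((V₁.filter fun w => H.Reachable v w).card : ℝ) ≤ n := by exact_mod_cast this
      linarith
    obtain ⟨w, hw⟩ := hinter
    rw [Finset.mem_inter, Finset.mem_filter, Finset.mem_filter] at hw
    exact hw.1.2.trans hw.2.2.symm
  · have : V₁.Nonempty := Finset.card_pos.mp (hV₁ ▸ hn)
    exact ⟨this.choose⟩
end

section
/- Let G be a bipartite graph with parts V₁, V₂ of size n and minimum degree δ(G) ≥ (13/16 + δ)n for some δ > 0. Given a 2-colouring of G with colours red and blue, let V_B be the set of vertices with at least (9/16 + 3δ/4)n blue neighbours. If V_B = ∅, then the red subgraph G_R has minimum degree greater than n/4, and V(G) can be covered by at most 3 red components. -/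
section aux

variable {V : Type*} [Fintype V] [DecidableEq V]

/-- The red subgraph of `G` under colouring `c`. -/
private def redG (G : SimpleGraph V) (c : Sym2 V → Fin 2) : SimpleGraph V where
  Adj x y := G.Adj x y ∧ c s(x, y) = 0
  symm := by
    constructor
    intro x y ⟨h, hc⟩
    exact ⟨h.symm, by rwa [Sym2.eq_swap]⟩
  loopless := by
    constructor
    intro x ⟨h, _⟩
    exact G.loopless.irrefl x h

private lemma redG_adj {G : SimpleGraph V} {c : Sym2 V → Fin 2} {x y : V} :
    (redG G c).Adj x y ↔ G.Adj x y ∧ c s(x, y) = 0 := Iff.rfl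

/-- Lift a walk in `redG G c` whose vertices are all in component `K` to a
reachability statement in the coercion of the corresponding subgraph of `G`. -/
private lemma walk_lift (G : SimpleGraph V) (c : Sym2 V → Fin 2)
    (K : (redG G c).ConnectedComponent)
    (H : G.Subgraph)
    (hverts : H.verts = K.supp)
    (hadj : ∀ x y, H.Adj x y ↔ (redG G c).Adj x y ∧ (redG G c).connectedComponentMk x = K)
    {x y : V} (p : (redG G c).Walk x y) (hx : (redG G c).connectedComponentMk x = K) :
    ∀ (hxv : x ∈ H.verts) (hyv : y ∈ H.verts),
      H.coe.Reachable ⟨x, hxv⟩ ⟨y, hyv⟩ := by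
  induction p with
  | nil => intro _ _; rfl
  | @cons a b d hab p ih =>
    intro hav hdv
    have hb : (redG G c).connectedComponentMk b = K := by
      rw [← hx]; exact (SimpleGraph.ConnectedComponent.sound hab.reachable).symm
    have hbv : b ∈ H.verts := by
      rw [hverts]; exact hb
    have hAdj : H.Adj a b := (hadj a b).2 ⟨hab, hx⟩
    have h1 : H.coe.Adj ⟨a, hav⟩ ⟨b, hbv⟩ := hAdj
    exact h1.reachable.trans (ih hb hbv hdv)

end aux

/-- If `G` is bipartite with parts of size `n`, minimum degree at least `(13/16 + δ)n`,
and in a given 2-colouring (`0` = red, `1` = blue) no vertex has at least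
`(9/16 + 3δ/4)n` blue neighbours (i.e. `V_B = ∅`), then every vertex has red degree
greater than `n/4`, and `V(G)` can be covered by at most three red components. -/
theorem empty_VB_red_cover {V : Type*} [Fintype V] [DecidableEq V]
    (G : SimpleGraph V) [DecidableRel G.Adj]
    (V₁ V₂ : Finset V) (n : ℕ) (hn : 0 < n) (δ : ℝ) (hδ : 0 < δ)
    (hpart : V₁ ∪ V₂ = Finset.univ) (hdisj : Disjoint V₁ V₂)
    (hV₁ : V₁.card = n) (hV₂ : V₂.card = n)
    (hbip : ∀ x y, G.Adj x y → (x ∈ V₁ ∧ y ∈ V₂) ∨ (x ∈ V₂ ∧ y ∈ V₁))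
    (hmin : ∀ v : V, (13 / 16 + δ) * n ≤ (G.degree v : ℝ))
    (c : Sym2 V → Fin 2)
    (hVB : ∀ v : V,
      ((((G.neighborFinset v).filter (fun w => c s(v, w) = 1)).card : ℝ) <
        (9 / 16 + 3 * δ / 4) * n)) :
    (∀ v : V, (n : ℝ) / 4 <
        (((G.neighborFinset v).filter (fun w => c s(v, w) = 0)).card : ℝ)) ∧
    ∃ H : Fin 3 → G.Subgraph,
      (∀ i, (H i).Connected) ∧
      (∀ i, ∀ e ∈ (H i).edgeSet, c e = 0) ∧
      ∀ v, ∃ i, v ∈ (H i).verts := by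
  classical
  -- Part 1: red degree bound
  have hdeg : ∀ v : V, (n : ℝ) / 4 <
      (((G.neighborFinset v).filter (fun w => c s(v, w) = 0)).card : ℝ) := by
    intro v
    have hsplit : ((G.neighborFinset v).filter (fun w => c s(v, w) = 0)).card +
        ((G.neighborFinset v).filter (fun w => c s(v, w) = 1)).card =
        (G.neighborFinset v).card := by
      have heq : (G.neighborFinset v).filter (fun w => c s(v, w) = 1) =
          (G.neighborFinset v).filter (fun w => ¬ c s(v, w) = 0) := by
        apply Finset.filter_congr
        intro w _
        have h2 : ∀ a : Fin 2, a = 1 ↔ ¬ a = 0 := by decide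
        simp [h2]
      rw [heq]
      exact Finset.card_filter_add_card_filter_not _
    have hdv : (G.neighborFinset v).card = G.degree v := G.card_neighborFinset_eq_degree v
    have h1 := hmin v
    have h2 := hVB v
    have hcast : (((G.neighborFinset v).filter (fun w => c s(v, w) = 0)).card : ℝ) +
        (((G.neighborFinset v).filter (fun w => c s(v, w) = 1)).card : ℝ) =
        (G.degree v : ℝ) := by
      rw [← hdv]
      exact_mod_cast congrArg (Nat.cast (R := ℝ)) hsplit
    have hn' : (0 : ℝ) ≤ (n : ℝ) := Nat.cast_nonneg n
    nlinarith
  refine ⟨hdeg, ?_⟩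
  -- The red graph
  set R : SimpleGraph V := redG G c with hR
  have hRadj : ∀ x y, R.Adj x y ↔ G.Adj x y ∧ c s(x, y) = 0 := fun _ _ => Iff.rfl
  haveI : Finite R.ConnectedComponent := Quot.finite _
  haveI : Fintype R.ConnectedComponent := Fintype.ofFinite _
  -- each component has more than n/4 vertices in V₁
  have hcomp : ∀ K : R.ConnectedComponent,
      (n : ℝ) / 4 < ((V₁.filter (fun x => R.connectedComponentMk x = K)).card : ℝ) := by
    intro K
    obtain ⟨v, rfl⟩ := K.exists_rep
    -- v has a red neighbour
    have hpos : (0 : ℝ) < (n : ℝ) / 4 := by positivity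
    have hne : ((G.neighborFinset v).filter (fun w => c s(v, w) = 0)).Nonempty := by
      rw [← Finset.card_pos]
      have := hdeg v
      by_contra h
      simp only [Finset.card_pos, Finset.not_nonempty_iff_eq_empty] at h
      rw [h] at this
      simp at this
      linarith
    obtain ⟨w, hw⟩ := hne
    simp only [Finset.mem_filter, SimpleGraph.mem_neighborFinset] at hw
    have hvw : R.Adj v w := ⟨hw.1, hw.2⟩
    -- find u ∈ V₂ in the component of v
    obtain ⟨u, hu2, huK⟩ : ∃ u, u ∈ V₂ ∧
        R.connectedComponentMk u = R.connectedComponentMk v := by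
      rcases hbip v w hw.1 with ⟨_, h2⟩ | ⟨h2, _⟩
      · exact ⟨w, h2, (SimpleGraph.ConnectedComponent.sound hvw.reachable).symm⟩
      · exact ⟨v, h2, rfl⟩
    -- red neighbours of u lie in V₁ and in the component
    have hsub : (G.neighborFinset u).filter (fun x => c s(u, x) = 0) ⊆
        V₁.filter (fun x => R.connectedComponentMk x = R.connectedComponentMk v) := by
      intro x hx
      simp only [Finset.mem_filter, SimpleGraph.mem_neighborFinset] at hx
      have hux : R.Adj u x := ⟨hx.1, hx.2⟩
      have hx1 : x ∈ V₁ := by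
        rcases hbip u x hx.1 with ⟨h1, _⟩ | ⟨_, h1⟩
        · exact absurd hu2 (Finset.disjoint_left.mp hdisj h1)
        · exact h1
      refine Finset.mem_filter.mpr ⟨hx1, ?_⟩
      rw [← huK]
      exact (SimpleGraph.ConnectedComponent.sound hux.reachable).symm
    have := hdeg u
    have hcard := Finset.card_le_card hsub
    calc (n : ℝ) / 4 < _ := this
      _ ≤ _ := by exact_mod_cast hcard
  -- nat version
  have hcompN : ∀ K : R.ConnectedComponent,
      n + 1 ≤ 4 * (V₁.filter (fun x => R.connectedComponentMk x = K)).card := by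
    intro K
    have := hcomp K
    have : (n : ℝ) < 4 * ((V₁.filter (fun x => R.connectedComponentMk x = K)).card : ℝ) := by
      linarith
    have : n < 4 * (V₁.filter (fun x => R.connectedComponentMk x = K)).card := by
      exact_mod_cast this
    omega
  -- at most 3 components
  have hsum : V₁.card = ∑ K : R.ConnectedComponent,
      (V₁.filter (fun x => R.connectedComponentMk x = K)).card :=
    Finset.card_eq_sum_card_fiberwise (fun x _ => Finset.mem_univ _)
  have hcard3 : Fintype.card R.ConnectedComponent ≤ 3 := by
    by_contra h
    push_neg at h
    have h4 : 4 ≤ Fintype.card R.ConnectedComponent := h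
    have hbound : Fintype.card R.ConnectedComponent * (n + 1) ≤ 4 * n := by
      calc Fintype.card R.ConnectedComponent * (n + 1)
          = ∑ _K : R.ConnectedComponent, (n + 1) := by
            rw [Finset.sum_const, Finset.card_univ, smul_eq_mul]
        _ ≤ ∑ K : R.ConnectedComponent,
            4 * (V₁.filter (fun x => R.connectedComponentMk x = K)).card :=
            Finset.sum_le_sum (fun K _ => hcompN K)
        _ = 4 * V₁.card := by rw [← Finset.mul_sum, ← hsum]
        _ = 4 * n := by rw [hV₁]
    have := Nat.mul_le_mul_right (n + 1) h4
    omega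
  -- embedding into Fin 3
  have hemb : Nonempty (R.ConnectedComponent ↪ Fin 3) := by
    apply Function.Embedding.nonempty_of_card_le
    simpa using hcard3
  obtain ⟨g⟩ := hemb
  -- a default vertex
  have hVne : (Finset.univ : Finset V).Nonempty := by
    rw [← hpart]
    have : V₁.Nonempty := Finset.card_pos.mp (hV₁ ▸ hn)
    exact this.mono Finset.subset_union_left
  obtain ⟨v₀, _⟩ := hVne
  -- inverse of g
  let f : Fin 3 → R.ConnectedComponent := fun i =>
    if h : ∃ K, g K = i then h.choose else R.connectedComponentMk v₀
  have hf : ∀ K, f (g K) = K := by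
    intro K
    have h : ∃ K', g K' = g K := ⟨K, rfl⟩
    simp only [f, dif_pos h]
    exact g.injective h.choose_spec
  -- the subgraphs
  let Hs : Fin 3 → G.Subgraph := fun i =>
    { verts := (f i).supp
      Adj := fun x y => R.Adj x y ∧ R.connectedComponentMk x = f i
      adj_sub := fun h => h.1.1
      edge_vert := fun h => h.2
      symm := by
        constructor
        intro x y ⟨hxy, hx⟩
        refine ⟨hxy.symm, ?_⟩
        rw [← hx]
        exact (SimpleGraph.ConnectedComponent.sound hxy.reachable).symm }
  refine ⟨Hs, ?_, ?_, ?_⟩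
  · -- connected
    intro i
    rw [SimpleGraph.Subgraph.connected_iff]
    constructor
    · rw [SimpleGraph.Subgraph.preconnected_iff]
      intro ⟨x, hx⟩ ⟨y, hy⟩
      have hxK : R.connectedComponentMk x = f i := hx
      have hyK : R.connectedComponentMk y = f i := hy
      have hreach : R.Reachable x y := by
        have : R.connectedComponentMk x = R.connectedComponentMk y := by rw [hxK, hyK]
        exact (SimpleGraph.ConnectedComponent.eq).mp this
      obtain ⟨p⟩ := hreach
      exact walk_lift G c (f i) (Hs i) rfl (fun _ _ => Iff.rfl) p hxK hx hy
    · -- nonempty verts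
      obtain ⟨v, hv⟩ := (f i).exists_rep
      exact ⟨v, show R.connectedComponentMk v = f i from hv⟩
  · -- edges are red
    intro i e he
    induction e with
    | h x y =>
      have : (Hs i).Adj x y := he
      exact this.1.2
  · -- covering
    intro v
    refine ⟨g (R.connectedComponentMk v), ?_⟩
    show v ∈ (f (g (R.connectedComponentMk v))).supp
    rw [hf]
    rfl
end
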